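/- For distinct lines ℓ and ℓ' in ℍ^n, the composite r_ℓ ∘ r_{ℓ'} of the reflections of order 2 in ℓ and ℓ' has order 5 (as an invertible ℍ-linear map) if and only if the angle between ℓ and ℓ' is either π/5 or 2π/5. -/

import Mathlib

noncomputable section

local notation "ℍ" => Quaternion ℝ

/-- The standard Hermitian form on `ℍⁿ`, conjugate-linear in the first variable and
ℍ-linear in the second: `⟨x,y⟩ = ∑ i, star (x i) * y i`. -/
def qInner {n : ℕ} (x y : Fin n → ℍ) : ℍ := ∑ i, star (x i) * y i

/-- The norm `|v| = √⟨v,v⟩` on `ℍⁿ`. -/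
def qNorm {n : ℕ} (v : Fin n → ℍ) : ℝ := Real.sqrt (qInner v v).re

/-- The ℍ-line `vℍ` spanned by `v` (the set of right scalar multiples of `v`). -/
def lineOf {n : ℕ} (v : Fin n → ℍ) : Set (Fin n → ℍ) := {w | ∃ c : ℍ, w = fun i => v i * c}

/-- `ℓ` and `ℓ'` are at angle `θ ∈ [0, π/2]`: for all nonzero `v ∈ ℓ`, `w ∈ ℓ'`,
`|⟨v,w⟩| = cos θ · |v|·|w|`. -/
def atAngle {n : ℕ} (ℓ ℓ' : Set (Fin n → ℍ)) (θ : ℝ) : Prop :=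
  ∀ v ∈ ℓ, ∀ w ∈ ℓ', v ≠ 0 → w ≠ 0 → ‖qInner v w‖ = Real.cos θ * (qNorm v * qNorm w)

/-- The reflection of order 2 in the line `αℍ`: `r(v) = v − α·(2/⟨α,α⟩)·⟨α,v⟩`. -/
def reflectIn {n : ℕ} (α : Fin n → ℍ) (v : Fin n → ℍ) : Fin n → ℍ :=
  fun i => v i - α i * ((2 / qInner α α) * qInner α v)

variable {n : ℕ}

lemma qInner_sub_right (x y z : Fin n → ℍ) : qInner x (y - z) = qInner x y - qInner x z := by
  simp [qInner, mul_sub, Finset.sum_sub_distrib]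

lemma qInner_add_right (x y z : Fin n → ℍ) : qInner x (y + z) = qInner x y + qInner x z := by
  simp [qInner, mul_add, Finset.sum_add_distrib]

lemma qInner_smul_right (x : Fin n → ℍ) (r : ℝ) (y : Fin n → ℍ) :
    qInner x (r • y) = r • qInner x y := by
  simp [qInner, Finset.smul_sum, mul_smul_comm]

lemma qInner_mulr (x y : Fin n → ℍ) (μ : ℍ) :
    qInner x (fun i => y i * μ) = qInner x y * μ := by
  simp [qInner, Finset.sum_mul, mul_assoc]

lemma star_qInner (x y : Fin n → ℍ) : star (qInner x y) = qInner y x := by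
  simp [qInner, star_sum, star_mul]

lemma qInner_self (x : Fin n → ℍ) :
    qInner x x = ((∑ i, Quaternion.normSq (x i) : ℝ) : ℍ) := by
  rw [qInner]
  have : ((∑ i, Quaternion.normSq (x i) : ℝ) : ℍ) = ∑ i, ((Quaternion.normSq (x i) : ℝ) : ℍ) := by
    induction (Finset.univ : Finset (Fin n)) using Finset.induction with
    | empty => simp
    | insert _ _ h ih => simp [Finset.sum_insert h, ih, ← QuaternionAlgebra.coe_add]
  rw [this]
  exact Finset.sum_congr rfl fun i _ => Quaternion.star_mul_self (x i)

lemma qInner_mul_mul (x y : Fin n → ℍ) (γ δ : ℍ) :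
    qInner (fun i => x i * γ) (fun i => y i * δ) = star γ * (qInner x y * δ) := by
  simp only [qInner, star_mul, Finset.mul_sum, Finset.sum_mul]
  congr 1; funext i; simp [mul_assoc]

lemma sum_normSq_pos {x : Fin n → ℍ} (hx : x ≠ 0) : 0 < ∑ i, Quaternion.normSq (x i) := by
  rcases Function.ne_iff.mp hx with ⟨i, hi⟩
  refine Finset.sum_pos' (fun j _ => Quaternion.normSq_nonneg) ⟨i, Finset.mem_univ i, ?_⟩
  exact lt_of_le_of_ne Quaternion.normSq_nonneg (Ne.symm (Quaternion.normSq_ne_zero.mpr hi))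


/-- `Emap v y = v · (2/⟨v,v⟩) ⟨v,y⟩`. -/
def Emap {n : ℕ} (v y : Fin n → ℍ) : Fin n → ℍ :=
  fun i => v i * ((2 / qInner v v) * qInner v y)

lemma reflect_eq (v u : Fin n → ℍ) : reflectIn v u = u - Emap v u := rfl

lemma Emap_sub (v y z : Fin n → ℍ) : Emap v (y - z) = Emap v y - Emap v z := by
  funext i
  simp [Emap, qInner_sub_right, mul_sub]

lemma Emap_add (v y z : Fin n → ℍ) : Emap v (y + z) = Emap v y + Emap v z := by
  funext i
  simp [Emap, qInner_add_right, mul_add]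

lemma Emap_smul (v : Fin n → ℍ) (r : ℝ) (y : Fin n → ℍ) :
    Emap v (r • y) = r • Emap v y := by
  funext i
  simp [Emap, qInner_smul_right, mul_smul_comm]

lemma coe_div_q (x y : ℝ) : ((x / y : ℝ) : ℍ) = (x : ℍ) / (y : ℍ) := by
  exact Quaternion.coe_div x y

lemma coe_ne_zero_q {A : ℝ} (hA0 : A ≠ 0) : (A : ℍ) ≠ 0 := fun h => by
  rw [← Quaternion.coe_zero] at h
  exact hA0 (Quaternion.coe_injective h)

lemma sid1 {A : ℝ} (hA0 : A ≠ 0) (μ : ℍ) : (2 / (A : ℍ)) * ((A : ℍ) * μ) = (2 : ℝ) • μ := by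
  rw [← mul_assoc, div_mul_cancel₀ _ (coe_ne_zero_q hA0),
    show (2 : ℍ) = ((2:ℝ) : ℍ) by norm_cast, Quaternion.coe_mul_eq_smul]

lemma Emap_vmul {A : ℝ} {v : Fin n → ℍ} (hA : qInner v v = (A:ℍ)) (hA0 : A ≠ 0) (μ : ℍ) :
    Emap v (fun i => v i * μ) = fun i => v i * ((2:ℝ) • μ) := by
  funext i
  show v i * ((2 / qInner v v) * qInner v (fun i => v i * μ)) = _
  rw [qInner_mulr, hA, sid1 hA0]

lemma Emap_self {A : ℝ} {v : Fin n → ℍ} (hA : qInner v v = (A:ℍ)) (hA0 : A ≠ 0) :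
    Emap v v = (2:ℝ) • v := by
  funext i
  show v i * ((2 / qInner v v) * qInner v v) = _
  rw [hA, div_mul_cancel₀ _ (coe_ne_zero_q hA0),
    show (2:ℍ) = ((2:ℝ):ℍ) by norm_cast, ← Quaternion.coe_commutes,
    Quaternion.coe_mul_eq_smul]
  rfl

lemma Emap_Emap {A : ℝ} {v : Fin n → ℍ} (hA : qInner v v = (A:ℍ)) (hA0 : A ≠ 0)
    (y : Fin n → ℍ) : Emap v (Emap v y) = (2:ℝ) • Emap v y := by
  have h1 : Emap v y = fun i => v i * ((2 / qInner v v) * qInner v y) := rfl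
  rw [h1, Emap_vmul hA hA0]
  funext i
  simp [mul_smul_comm]

lemma sid2 {A B N s : ℝ} (hA0 : A ≠ 0) (hB0 : B ≠ 0) {c : ℍ} (hN : Quaternion.normSq c = N)
    (hs : s = 4 * N / (A * B) - 2) (μ : ℍ) :
    (2 / (A:ℍ)) * (c * ((2 / (B:ℍ)) * (star c * μ))) = (s + 2) • μ := by
  rw [show (2:ℍ)/(A:ℍ) = ((2/A:ℝ):ℍ) from (coe_div_q 2 A).symm,
      show (2:ℍ)/(B:ℍ) = ((2/B:ℝ):ℍ) from (coe_div_q 2 B).symm,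
      Quaternion.coe_mul_eq_smul, Quaternion.coe_mul_eq_smul,
      mul_smul_comm, smul_smul, ← mul_assoc, Quaternion.self_mul_star, hN,
      Quaternion.coe_mul_eq_smul, smul_smul]
  congr 1
  rw [hs]
  field_simp
  ring

lemma Emap_EFE {A B N s : ℝ} {v w : Fin n → ℍ} (hA : qInner v v = (A:ℍ))
    (hB : qInner w w = (B:ℍ)) (hA0 : A ≠ 0) (hB0 : B ≠ 0)
    (hN : Quaternion.normSq (qInner v w) = N) (hs : s = 4*N/(A*B) - 2) (y : Fin n → ℍ) :
    Emap v (Emap w (Emap v y)) = (s + 2) • Emap v y := by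
  set μ := (2 / qInner v v) * qInner v y with hμ
  have h1 : Emap v y = fun i => v i * μ := rfl
  have h2 : Emap w (fun i => v i * μ) = fun i => w i * ((2 / (B:ℍ)) * (qInner w v * μ)) := by
    funext i
    show w i * ((2 / qInner w w) * qInner w (fun i => v i * μ)) = _
    rw [qInner_mulr, hB]
  have h3 : Emap v (fun i => w i * ((2/(B:ℍ)) * (qInner w v * μ)))
      = fun i => v i * ((2/(A:ℍ)) * (qInner v w * ((2/(B:ℍ)) * (qInner w v * μ)))) := by
    funext i
    show v i * ((2 / qInner v v) * qInner v (fun i => w i * ((2/(B:ℍ)) * (qInner w v * μ)))) = _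
    rw [qInner_mulr, hA]
  rw [h1, h2, h3]
  funext i
  rw [← star_qInner v w, sid2 hA0 hB0 hN hs μ]
  simp [h1, mul_smul_comm]

/-- the composite of the two reflections, as a plain function -/
def Tmap {n : ℕ} (v w u : Fin n → ℍ) : Fin n → ℍ := reflectIn v (reflectIn w u)

lemma Tmap_eq (v w y : Fin n → ℍ) :
    Tmap v w y = y - Emap v y - Emap w y + Emap v (Emap w y) := by
  show reflectIn v (reflectIn w y) = _
  rw [reflect_eq w y, reflect_eq v _, Emap_sub]
  abel

lemma Tmap_add (v w y z : Fin n → ℍ) :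
    Tmap v w (y + z) = Tmap v w y + Tmap v w z := by
  simp only [Tmap_eq, Emap_add]
  abel

lemma Tmap_sub (v w y z : Fin n → ℍ) :
    Tmap v w (y - z) = Tmap v w y - Tmap v w z := by
  simp only [Tmap_eq, Emap_sub]
  abel

lemma Tmap_smul (v w : Fin n → ℍ) (r : ℝ) (y : Fin n → ℍ) :
    Tmap v w (r • y) = r • Tmap v w y := by
  simp only [Tmap_eq, Emap_smul, smul_sub, smul_add]

lemma T5_formula {A B N s : ℝ} {v w : Fin n → ℍ} (hA : qInner v v = (A:ℍ))
    (hB : qInner w w = (B:ℍ)) (hA0 : A ≠ 0) (hB0 : B ≠ 0)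
    (hN : Quaternion.normSq (qInner v w) = N) (hs : s = 4*N/(A*B) - 2) (u : Fin n → ℍ) :
    Tmap v w (Tmap v w (Tmap v w (Tmap v w (Tmap v w u)))) =
      u + ((-1)+2*s+s^2-2*s^3-s^4) • Emap v u + ((-1)+2*s+s^2-2*s^3-s^4) • Emap w u
        + (1-s-2*s^2+s^3+s^4) • Emap v (Emap w u) + ((-s)+s^2+s^3) • Emap w (Emap v u) := by
  have hN' : Quaternion.normSq (qInner w v) = N := by
    rw [← star_qInner, Quaternion.normSq_star, hN]
  have hs' : s = 4*N/(B*A) - 2 := by rw [hs]; ring_nf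
  set x0 := u with hx0
  set x1 := Emap v u with hx1
  set x2 := Emap w u with hx2
  set x3 := Emap v x2 with hx3
  set x4 := Emap w x1 with hx4
  have hT0 : Tmap v w x0 = x0 - x1 - x2 + x3 := Tmap_eq v w u
  have hT1 : Tmap v w x1 = (s+1) • x1 - x4 := by
    rw [Tmap_eq, Emap_Emap hA hA0, ← hx4, Emap_EFE hA hB hA0 hB0 hN hs]
    module
  have hT2 : Tmap v w x2 = x3 - x2 := by
    rw [Tmap_eq, ← hx3, Emap_Emap hB hB0, Emap_smul, ← hx3]
    module
  have hT3 : Tmap v w x3 = (s+1) • x3 - (s+2) • x2 := by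
    rw [Tmap_eq, hx3, Emap_Emap hA hA0, Emap_EFE hB hA hB0 hA0 hN' hs', Emap_smul,
      ← hx3, ← hx2]
    module
  have hT4 : Tmap v w x4 = (s+2) • x1 - x4 := by
    rw [Tmap_eq, hx4, Emap_EFE hA hB hA0 hB0 hN hs, Emap_Emap hB hB0, Emap_smul,
      Emap_EFE hA hB hA0 hB0 hN hs, ← hx1, ← hx4]
    module
  have c2 : Tmap v w (Tmap v w x0) = x0 - (2+s) • x1 - (2+s) • x2 + (1+s) • x3 + x4 := by
    rw [hT0, Tmap_add, Tmap_sub, Tmap_sub, hT0, hT1, hT2, hT3]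
    module
  have c3 : Tmap v w (Tmap v w (Tmap v w x0)) =
      x0 + ((-1)-2*s-s^2) • x1 + ((-1)-2*s-s^2) • x2 + (s+s^2) • x3 + (1+s) • x4 := by
    rw [c2, Tmap_add, Tmap_add, Tmap_sub, Tmap_sub, Tmap_smul, Tmap_smul, Tmap_smul,
      hT0, hT1, hT2, hT3, hT4]
    module
  have c4 : Tmap v w (Tmap v w (Tmap v w (Tmap v w x0))) =
      x0 + ((-2)*s^2-s^3) • x1 + ((-2)*s^2-s^3) • x2 + ((-s)+s^2+s^3) • x3 + (s+s^2) • x4 := by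
    rw [c3, Tmap_add, Tmap_add, Tmap_add, Tmap_add, Tmap_smul, Tmap_smul, Tmap_smul, Tmap_smul,
      hT0, hT1, hT2, hT3, hT4]
    module
  rw [c4, Tmap_add, Tmap_add, Tmap_add, Tmap_add, Tmap_smul, Tmap_smul, Tmap_smul, Tmap_smul,
    hT0, hT1, hT2, hT3, hT4]
  module


lemma lineOf_eq_of_mem {v w : Fin n → ℍ} (hw : w ≠ 0) (d : ℍ) (h : w = fun i => v i * d) :
    lineOf v = lineOf w := by
  have hd : d ≠ 0 := by
    rintro rfl
    exact hw (by rw [h]; funext i; simp)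
  ext u
  constructor
  · rintro ⟨e, rfl⟩
    exact ⟨d⁻¹ * e, by funext i; rw [h]; simp [mul_assoc, hd]⟩
  · rintro ⟨e, rfl⟩
    exact ⟨d * e, by funext i; rw [h]; simp [mul_assoc]⟩

lemma indep {v w : Fin n → ℍ} (hv : v ≠ 0) (hw : w ≠ 0) (hne : lineOf v ≠ lineOf w)
    (μ ν : ℍ) (h : ∀ i, v i * μ + w i * ν = 0) : μ = 0 ∧ ν = 0 := by
  have hν : ν = 0 := by
    by_contra hν
    apply hne
    apply lineOf_eq_of_mem hw (-(μ * ν⁻¹))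
    funext i
    have := h i
    have hwi : w i * ν = -(v i * μ) := by rw [eq_neg_iff_add_eq_zero, add_comm]; exact this
    calc w i = w i * ν * ν⁻¹ := by rw [mul_assoc, mul_inv_cancel₀ hν, mul_one]
    _ = v i * -(μ * ν⁻¹) := by rw [hwi]; simp [mul_assoc]
  subst hν
  refine ⟨?_, rfl⟩
  by_contra hμ
  apply hv
  funext i
  have := h i
  simp only [mul_zero, add_zero] at this
  rcases mul_eq_zero.mp this with h1 | h1
  · exact h1
  · exact absurd h1 hμ

lemma key {v w : Fin n → ℍ} (hv : v ≠ 0) (hw : w ≠ 0) (hne : lineOf v ≠ lineOf w) :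
    orderOf (show Function.End (Fin n → ℍ) from reflectIn v ∘ reflectIn w) = 5 ↔
      (Quaternion.normSq (qInner v w) =
          (3 + Real.sqrt 5)/8 * ((∑ i, Quaternion.normSq (v i)) * (∑ i, Quaternion.normSq (w i))) ∨
       Quaternion.normSq (qInner v w) =
          (3 - Real.sqrt 5)/8 * ((∑ i, Quaternion.normSq (v i)) * (∑ i, Quaternion.normSq (w i)))) := by
  haveI : Fact (Nat.Prime 5) := ⟨by norm_num⟩
  set A : ℝ := ∑ i, Quaternion.normSq (v i) with hAdef
  set B : ℝ := ∑ i, Quaternion.normSq (w i) with hBdef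
  set N : ℝ := Quaternion.normSq (qInner v w) with hNdef
  set s : ℝ := 4*N/(A*B) - 2 with hs
  have hApos : 0 < A := sum_normSq_pos hv
  have hBpos : 0 < B := sum_normSq_pos hw
  have hA0 : A ≠ 0 := ne_of_gt hApos
  have hB0 : B ≠ 0 := ne_of_gt hBpos
  have hA : qInner v v = (A:ℍ) := qInner_self v
  have hB : qInner w w = (B:ℍ) := qInner_self w
  have hN : Quaternion.normSq (qInner v w) = N := rfl
  have hN' : Quaternion.normSq (qInner w v) = N := by
    rw [← star_qInner, Quaternion.normSq_star, hN]
  have hs' : s = 4*N/(B*A) - 2 := by rw [hs]; ring_nf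
  have hsq5 : Real.sqrt 5 ^ 2 = 5 := Real.sq_sqrt (by norm_num)
  have htwo : (2:ℍ) ≠ 0 := by
    rw [show (2:ℍ) = ((2:ℝ):ℍ) by norm_cast]
    exact coe_ne_zero_q (by norm_num)
  have h4N : 4*N = (s+2)*(A*B) := by
    rw [hs]
    field_simp
    ring
  set T : Function.End (Fin n → ℍ) := reflectIn v ∘ reflectIn w with hTdef
  have hmul_apply : ∀ (f g : Function.End (Fin n → ℍ)) (u : Fin n → ℍ), (f * g) u = f (g u) :=
    fun _ _ _ => rfl
  have hpow_apply : ∀ u, (T^5 : Function.End (Fin n → ℍ)) u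
      = Tmap v w (Tmap v w (Tmap v w (Tmap v w (Tmap v w u)))) := by
    intro u
    rw [show (5:ℕ) = 4+1 from rfl, pow_succ, hmul_apply,
        show (4:ℕ) = 3+1 from rfl, pow_succ, hmul_apply,
        show (3:ℕ) = 2+1 from rfl, pow_succ, hmul_apply,
        show (2:ℕ) = 1+1 from rfl, pow_succ, hmul_apply, pow_one]
    simp only [hTdef]
    simp only [Function.comp_apply, Tmap]
  -- Step A : quadratic condition iff normSq condition
  have hk_iff : (s^2 + s - 1 = 0) ↔ (N = (3 + Real.sqrt 5)/8 * (A*B) ∨ N = (3 - Real.sqrt 5)/8 * (A*B)) := by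
    constructor
    · intro hk
      have h5 : (2*s+1 - Real.sqrt 5) * (2*s+1 + Real.sqrt 5) = 0 := by
        linear_combination 4*hk - hsq5
      rcases mul_eq_zero.mp h5 with h | h
      · left; linear_combination (1/4)*h4N + (A*B/8)*h
      · right; linear_combination (1/4)*h4N + (A*B/8)*h
    · rintro (h | h)
      · have hsv : s = (Real.sqrt 5 - 1)/2 := by
          rw [hs, h]; field_simp; ring
        rw [hsv]; linear_combination (1/4)*hsq5
      · have hsv : s = (-Real.sqrt 5 - 1)/2 := by
          rw [hs, h]; field_simp; ring
        rw [hsv]; linear_combination (1/4)*hsq5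
  -- the key vector x1 = Emap v w
  have hEvw : Emap v w = fun i => v i * ((2 / qInner v v) * qInner v w) := rfl
  have hFE : Emap w (Emap v w) = (s+2) • w := by
    have h1 := Emap_EFE hB hA hB0 hA0 hN' hs' w
    rw [Emap_self hB hB0, Emap_smul, Emap_smul] at h1
    apply smul_right_injective (Fin n → ℍ) (by norm_num : (2:ℝ) ≠ 0)
    show (2:ℝ) • Emap w (Emap v w) = (2:ℝ) • ((s + 2) • w)
    rw [h1]
    module
  -- Step B : T^5 = 1 iff quadratic condition
  have hT5_iff : (T^5 = 1) ↔ (s^2 + s - 1 = 0) := by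
    constructor
    · intro h5
      have happ : Tmap v w (Tmap v w (Tmap v w (Tmap v w (Tmap v w w)))) = w := by
        have := congrFun h5 w
        rw [hpow_apply] at this
        exact this
      rw [T5_formula hA hB hA0 hB0 hN hs w, Emap_self hB hB0, Emap_smul, hFE] at happ
      have hcomb : ((((-1)+2*s+s^2-2*s^3-s^4) + 2*(1-s-2*s^2+s^3+s^4)) • Emap v w)
          + ((2*((-1)+2*s+s^2-2*s^3-s^4) + (s+2)*((-s)+s^2+s^3)) • w) = 0 := by
        calc _ = (w + ((-1)+2*s+s^2-2*s^3-s^4) • Emap v w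
              + ((-1)+2*s+s^2-2*s^3-s^4) • ((2:ℝ) • w)
              + (1-s-2*s^2+s^3+s^4) • ((2:ℝ) • Emap v w)
              + ((-s)+s^2+s^3) • ((s+2) • w)) - w := by module
          _ = 0 := by rw [happ, sub_self]
      have hpt : ∀ i, v i * (((((-1)+2*s+s^2-2*s^3-s^4) + 2*(1-s-2*s^2+s^3+s^4)) : ℝ)
            • ((2 / qInner v v) * qInner v w))
          + w i * (((2*((-1)+2*s+s^2-2*s^3-s^4) + (s+2)*((-s)+s^2+s^3)) : ℝ) : ℍ) = 0 := by
        intro i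
        have h := congrFun hcomb i
        rw [Pi.add_apply, Pi.smul_apply, Pi.smul_apply, Pi.zero_apply] at h
        calc v i * (_ • ((2 / qInner v v) * qInner v w)) + w i * _
            = (((((-1)+2*s+s^2-2*s^3-s^4) + 2*(1-s-2*s^2+s^3+s^4)) : ℝ) • (Emap v w i))
              + ((2*((-1)+2*s+s^2-2*s^3-s^4) + (s+2)*((-s)+s^2+s^3)) : ℝ) • (w i) := by
              rw [mul_smul_comm, Quaternion.mul_coe_eq_smul]; rfl
          _ = 0 := h
      obtain ⟨h1, h2⟩ := indep hv hw hne _ _ hpt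
      have hγ0 : (2*((-1)+2*s+s^2-2*s^3-s^4) + (s+2)*((-s)+s^2+s^3) : ℝ) = 0 := by
        have := h2
        rw [← Quaternion.coe_zero] at this
        exact Quaternion.coe_injective this
      rcases smul_eq_zero.mp h1 with hβ0 | hμ0
      · by_contra hk
        have hfac1 : (s^2+s-1)*(s^2-s-1) = 0 := by linear_combination hβ0
        have hfac2 : (s^2+s-1)*(2-s^2) = 0 := by linear_combination hγ0
        have hc1 : s^2-s-1 = 0 := by
          rcases mul_eq_zero.mp hfac1 with h|h
          · exact absurd h hk
          · exact h
        have hc2 : 2-s^2 = 0 := by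
          rcases mul_eq_zero.mp hfac2 with h|h
          · exact absurd h hk
          · exact h
        have hs1 : s = 1 := by linarith
        rw [hs1] at hc2; norm_num at hc2
      · -- the inner product vanishes : then s = -2 and hγ0 is false
        exfalso
        have hc0 : qInner v w = 0 := by
          rcases mul_eq_zero.mp hμ0 with h|h
          · rw [hA] at h
            exact absurd h (div_ne_zero htwo (coe_ne_zero_q hA0))
          · exact h
        have hN0 : N = 0 := by rw [← hN, hc0]; simp
        have hs2 : s = -2 := by rw [hs, hN0]; simp
        rw [hs2] at hγ0
        norm_num at hγ0
    · intro hk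
      have hP : ((-1)+2*s+s^2-2*s^3-s^4 : ℝ) = 0 := by linear_combination (1-s-s^2)*hk
      have hQ : (1-s-2*s^2+s^3+s^4 : ℝ) = 0 := by linear_combination ((-1)+s^2)*hk
      have hR : ((-s)+s^2+s^3 : ℝ) = 0 := by linear_combination s*hk
      funext u
      rw [hpow_apply, T5_formula hA hB hA0 hB0 hN hs u, hP, hQ, hR]
      show _ = u
      simp
  constructor
  · intro hord
    have h5 : T^5 = 1 := by rw [← hord]; exact pow_orderOf_eq_one T
    exact hk_iff.mp (hT5_iff.mp h5)
  · intro hright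
    have h5 := hT5_iff.mpr (hk_iff.mpr hright)
    have hT1 : T ≠ 1 := by
      intro h1
      have happ : Tmap v w w = w := congrFun h1 w
      rw [Tmap_eq, Emap_self hB hB0, Emap_smul] at happ
      have hcomb : ((1:ℝ) • Emap v w) + ((-2:ℝ) • w) = 0 := by
        calc _ = (w - Emap v w - (2:ℝ) • w + (2:ℝ) • Emap v w) - w := by module
          _ = 0 := by rw [happ, sub_self]
      have hpt : ∀ i, v i * (((1:ℝ)) • ((2 / qInner v v) * qInner v w))
          + w i * (((-2:ℝ)) : ℍ) = 0 := by
        intro i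
        have h := congrFun hcomb i
        rw [Pi.add_apply, Pi.smul_apply, Pi.smul_apply, Pi.zero_apply] at h
        calc v i * (_ • ((2 / qInner v v) * qInner v w)) + w i * _
            = ((1:ℝ) • (Emap v w i)) + ((-2:ℝ) • (w i)) := by
              rw [mul_smul_comm, Quaternion.mul_coe_eq_smul]; rfl
          _ = 0 := h
      obtain ⟨_, h2⟩ := indep hv hw hne _ _ hpt
      rw [← Quaternion.coe_zero] at h2
      have := Quaternion.coe_injective h2
      norm_num at this
    exact orderOf_eq_prime h5 hT1


lemma qNorm_eq (x : Fin n → ℍ) : qNorm x = Real.sqrt (∑ i, Quaternion.normSq (x i)) := by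
  rw [qNorm, qInner_self]
  norm_num

lemma norm_quat_eq (γ : ℍ) : ‖γ‖ = Real.sqrt (Quaternion.normSq γ) := by
  rw [Quaternion.normSq_eq_norm_mul_self, Real.sqrt_mul_self (norm_nonneg γ)]

lemma qNorm_mulr {x : Fin n → ℍ} (γ : ℍ) :
    qNorm (fun i => x i * γ) = qNorm x * ‖γ‖ := by
  set A : ℝ := ∑ i, Quaternion.normSq (x i) with hAdef
  have hA : qInner x x = (A:ℍ) := qInner_self x
  have hAnn : 0 ≤ A := Finset.sum_nonneg fun i _ => Quaternion.normSq_nonneg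
  have h1 : qInner (fun i => x i * γ) (fun i => x i * γ) = ((A * Quaternion.normSq γ : ℝ) : ℍ) := by
    rw [qInner_mul_mul, hA, Quaternion.coe_mul_eq_smul, mul_smul_comm, Quaternion.star_mul_self,
      Quaternion.smul_coe]
  rw [qNorm, h1, Quaternion.re_coe, Real.sqrt_mul hAnn, qNorm_eq, norm_quat_eq]

lemma atAngle_iff {v w : Fin n → ℍ} (hv : v ≠ 0) (hw : w ≠ 0) {θ : ℝ} (hθ : 0 ≤ Real.cos θ) :
    atAngle (lineOf v) (lineOf w) θ ↔
      Quaternion.normSq (qInner v w) =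
        (Real.cos θ)^2 * ((∑ i, Quaternion.normSq (v i)) * (∑ i, Quaternion.normSq (w i))) := by
  set A : ℝ := ∑ i, Quaternion.normSq (v i) with hAdef
  set B : ℝ := ∑ i, Quaternion.normSq (w i) with hBdef
  have hAnn : 0 ≤ A := Finset.sum_nonneg fun i _ => Quaternion.normSq_nonneg
  have hBnn : 0 ≤ B := Finset.sum_nonneg fun i _ => Quaternion.normSq_nonneg
  constructor
  · intro h
    have h1 := h v ⟨1, by funext i; rw [mul_one]⟩ w ⟨1, by funext i; rw [mul_one]⟩ hv hw
    rw [Quaternion.normSq_eq_norm_mul_self, h1, qNorm_eq v, qNorm_eq w, ← hAdef, ← hBdef]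
    rw [show Real.cos θ * (Real.sqrt A * Real.sqrt B) * (Real.cos θ * (Real.sqrt A * Real.sqrt B))
        = (Real.cos θ)^2 * ((Real.sqrt A * Real.sqrt A) * (Real.sqrt B * Real.sqrt B)) by ring,
      Real.mul_self_sqrt hAnn, Real.mul_self_sqrt hBnn]
  · intro h
    have hcnorm : ‖qInner v w‖ = Real.cos θ * (Real.sqrt A * Real.sqrt B) := by
      rw [norm_quat_eq, h, Real.sqrt_mul (sq_nonneg _), Real.sqrt_sq hθ,
        Real.sqrt_mul hAnn]
    rintro v' ⟨γ, rfl⟩ w' ⟨δ, rfl⟩ hv0 hw0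
    rw [qInner_mul_mul, norm_mul, norm_mul, Quaternion.norm_star, hcnorm,
      qNorm_mulr γ, qNorm_mulr δ, qNorm_eq v, qNorm_eq w, ← hAdef, ← hBdef]
    ring

/-- For distinct lines `ℓ = vℍ` and `ℓ' = wℍ`, the composite `r_ℓ ∘ r_{ℓ'}` of the order-2 reflections has order 5 (as an invertible ℍ-linear map) iff the angle between `ℓ` and `ℓ'` is `π/5` or `2π/5`. -/
theorem reflections_product_order_5 (n : ℕ) (v w : Fin n → ℍ)
    (hv : v ≠ 0) (hw : w ≠ 0) (hne : lineOf v ≠ lineOf w) :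
    orderOf (show Function.End (Fin n → ℍ) from reflectIn v ∘ reflectIn w) = 5 ↔
      (atAngle (lineOf v) (lineOf w) (Real.pi / 5) ∨ atAngle (lineOf v) (lineOf w) (2 * Real.pi / 5)) := by
  
  have hsq5 : Real.sqrt 5 ^ 2 = 5 := Real.sq_sqrt (by norm_num)
  have hsqnn : 0 ≤ Real.sqrt 5 := Real.sqrt_nonneg 5
  have hc1 : Real.cos (Real.pi / 5) = (1 + Real.sqrt 5) / 4 := Real.cos_pi_div_five
  have hc2 : Real.cos (2 * Real.pi / 5) = (Real.sqrt 5 - 1) / 4 := by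
    rw [show (2 * Real.pi / 5) = 2 * (Real.pi / 5) by ring, Real.cos_two_mul, hc1]
    linear_combination (1/8) * hsq5
  have hθ1 : 0 ≤ Real.cos (Real.pi / 5) := by rw [hc1]; positivity
  have hθ2 : 0 ≤ Real.cos (2 * Real.pi / 5) := by
    rw [hc2]
    nlinarith [hsq5, hsqnn]
  have hv1 : (Real.cos (Real.pi / 5))^2 = (3 + Real.sqrt 5) / 8 := by
    rw [hc1]; linear_combination (1/16) * hsq5
  have hv2 : (Real.cos (2 * Real.pi / 5))^2 = (3 - Real.sqrt 5) / 8 := by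
    rw [hc2]; linear_combination (1/16) * hsq5
  refine (key hv hw hne).trans (or_congr ?_ ?_)
  · rw [atAngle_iff hv hw hθ1, hv1]
  · rw [atAngle_iff hv hw hθ2, hv2]
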